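/- With T_r(x) = A_r(x) + D_r(x) as above, every row sum and every column sum of T_r(x) equals (1+x)^r; equivalently, the all-ones vector is an eigenvector of T_r(x) and of its transpose with eigenvalue (1+x)^r. -/

import Mathlib

open Matrix Kronecker

/-- Index type for `2^(n+1) × 2^(n+1)` matrices (level `r = n+1`). -/
def Idx : ℕ → Type
  | 0 => Fin 2
  | n + 1 => Fin 2 × Idx n

instance Idx.fintype : (n : ℕ) → Fintype (Idx n)
  | 0 => inferInstanceAs (Fintype (Fin 2))
  | n + 1 => letI := Idx.fintype n; inferInstanceAs (Fintype (Fin 2 × Idx n))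

instance Idx.decEq : (n : ℕ) → DecidableEq (Idx n)
  | 0 => inferInstanceAs (DecidableEq (Fin 2))
  | n + 1 => letI := Idx.decEq n; inferInstanceAs (DecidableEq (Fin 2 × Idx n))

def A1 (x : ℝ) : Matrix (Fin 2) (Fin 2) ℝ := !![1, 0; 0, x]
def B1 (x : ℝ) : Matrix (Fin 2) (Fin 2) ℝ := !![0, x; 1, 0]
def C1 (x : ℝ) : Matrix (Fin 2) (Fin 2) ℝ := !![0, 1; x, 0]
def D1 (x : ℝ) : Matrix (Fin 2) (Fin 2) ℝ := !![x, 0; 0, 1]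

/-- The quadruple `(A_r, B_r, C_r, D_r)` at level `r = n+1`, via the coproduct recursion. -/
def ABCD (x : ℝ) : (n : ℕ) →
    (Matrix (Idx n) (Idx n) ℝ × Matrix (Idx n) (Idx n) ℝ ×
      Matrix (Idx n) (Idx n) ℝ × Matrix (Idx n) (Idx n) ℝ)
  | 0 => (A1 x, B1 x, C1 x, D1 x)
  | n + 1 =>
    let p := ABCD x n
    (A1 x ⊗ₖ p.1 + B1 x ⊗ₖ p.2.2.1,
     A1 x ⊗ₖ p.2.1 + B1 x ⊗ₖ p.2.2.2,
     C1 x ⊗ₖ p.1 + D1 x ⊗ₖ p.2.2.1,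
     D1 x ⊗ₖ p.2.2.2 + C1 x ⊗ₖ p.2.1)

def Amat (x : ℝ) (n : ℕ) : Matrix (Idx n) (Idx n) ℝ := (ABCD x n).1
def Bmat (x : ℝ) (n : ℕ) : Matrix (Idx n) (Idx n) ℝ := (ABCD x n).2.1
def Cmat (x : ℝ) (n : ℕ) : Matrix (Idx n) (Idx n) ℝ := (ABCD x n).2.2.1
def Dmat (x : ℝ) (n : ℕ) : Matrix (Idx n) (Idx n) ℝ := (ABCD x n).2.2.2

def Kmat : Matrix (Fin 2) (Fin 2) ℝ := !![0, 1; 1, 0]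

/-- `K_{(r)} = I_{2^{r-1}} ⊗ K` at level `r = n+1`. -/
def Kr : (n : ℕ) → Matrix (Idx n) (Idx n) ℝ
  | 0 => Kmat
  | n + 1 => (1 : Matrix (Fin 2) (Fin 2) ℝ) ⊗ₖ Kr n

/-- `K^{⊗r}` at level `r = n+1`. -/
def Kpow : (n : ℕ) → Matrix (Idx n) (Idx n) ℝ
  | 0 => Kmat
  | n + 1 => Kmat ⊗ₖ Kpow n


lemma sum_idx_succ {M : Type*} [AddCommMonoid M] (n : ℕ) (f : Idx (n+1) → M) :
    ∑ p : Idx (n+1), f p = ∑ a : Fin 2, ∑ b : Idx n, f (a, b) :=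
  Fintype.sum_prod_type (f := f)

lemma sum_idx_zero {M : Type*} [AddCommMonoid M] (f : Idx 0 → M) :
    ∑ j : Idx 0, f j = f (0 : Fin 2) + f (1 : Fin 2) := Fin.sum_univ_two f

lemma rowsum_kron {n : ℕ} (M : Matrix (Fin 2) (Fin 2) ℝ) (N : Matrix (Idx n) (Idx n) ℝ)
    (a : Fin 2) (b : Idx n) :
    ∑ j : Idx (n+1), (M ⊗ₖ N) (a, b) j = (∑ c : Fin 2, M a c) * (∑ d : Idx n, N b d) := by
  rw [sum_idx_succ n (fun j => (M ⊗ₖ N) (a, b) j), Finset.sum_mul_sum]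
  rfl

lemma colsum_kron {n : ℕ} (M : Matrix (Fin 2) (Fin 2) ℝ) (N : Matrix (Idx n) (Idx n) ℝ)
    (a : Fin 2) (b : Idx n) :
    ∑ i : Idx (n+1), (M ⊗ₖ N) i (a, b) = (∑ c : Fin 2, M c a) * (∑ d : Idx n, N d b) := by
  rw [sum_idx_succ n (fun i => (M ⊗ₖ N) i (a, b)), Finset.sum_mul_sum]
  rfl

lemma key (x : ℝ) : ∀ n : ℕ,
    (∀ i : Idx n, (∑ j, Amat x n i j = ∑ j, Cmat x n i j) ∧
      (∑ j, Bmat x n i j = ∑ j, Dmat x n i j) ∧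
      (∑ j, Amat x n i j + ∑ j, Bmat x n i j = (1+x)^(n+1))) ∧
    (∀ j : Idx n, (∑ i, Amat x n i j = ∑ i, Bmat x n i j) ∧
      (∑ i, Cmat x n i j = ∑ i, Dmat x n i j) ∧
      (∑ i, Amat x n i j + ∑ i, Cmat x n i j = (1+x)^(n+1))) := by
  intro n
  induction n with
  | zero =>
    constructor
    · intro i
      match i with
      | (0 : Fin 2) =>
        simp only [sum_idx_zero]
        simp [sum_idx_zero, Amat, Bmat, Cmat, Dmat, ABCD, A1, B1, C1, D1]
        try ring
      | (1 : Fin 2) =>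
        simp only [sum_idx_zero]
        simp [sum_idx_zero, Amat, Bmat, Cmat, Dmat, ABCD, A1, B1, C1, D1]
        try ring
    · intro j
      match j with
      | (0 : Fin 2) =>
        simp only [sum_idx_zero]
        simp [sum_idx_zero, Amat, Bmat, Cmat, Dmat, ABCD, A1, B1, C1, D1]
        try ring
      | (1 : Fin 2) =>
        simp only [sum_idx_zero]
        simp [sum_idx_zero, Amat, Bmat, Cmat, Dmat, ABCD, A1, B1, C1, D1]
        try ring
  | succ n ih =>
    obtain ⟨ihr, ihc⟩ := ih
    have hA : Amat x (n+1) = A1 x ⊗ₖ Amat x n + B1 x ⊗ₖ Cmat x n := rfl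
    have hB : Bmat x (n+1) = A1 x ⊗ₖ Bmat x n + B1 x ⊗ₖ Dmat x n := rfl
    have hC : Cmat x (n+1) = C1 x ⊗ₖ Amat x n + D1 x ⊗ₖ Cmat x n := rfl
    have hD : Dmat x (n+1) = D1 x ⊗ₖ Dmat x n + C1 x ⊗ₖ Bmat x n := rfl
    constructor
    · rintro ⟨a, b⟩
      obtain ⟨e1, e2, e3⟩ := ihr b
      have sA : ∑ j, Amat x (n+1) (a, b) j
          = (∑ c, A1 x a c) * (∑ d, Amat x n b d) + (∑ c, B1 x a c) * (∑ d, Cmat x n b d) := by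
        rw [hA]
        erw [Finset.sum_add_distrib (f := fun j => _) (g := fun j => _)]
        rw [rowsum_kron, rowsum_kron]
      have sB : ∑ j, Bmat x (n+1) (a, b) j
          = (∑ c, A1 x a c) * (∑ d, Bmat x n b d) + (∑ c, B1 x a c) * (∑ d, Dmat x n b d) := by
        rw [hB]
        erw [Finset.sum_add_distrib (f := fun j => _) (g := fun j => _)]
        rw [rowsum_kron, rowsum_kron]
      have sC : ∑ j, Cmat x (n+1) (a, b) j
          = (∑ c, C1 x a c) * (∑ d, Amat x n b d) + (∑ c, D1 x a c) * (∑ d, Cmat x n b d) := by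
        rw [hC]
        erw [Finset.sum_add_distrib (f := fun j => _) (g := fun j => _)]
        rw [rowsum_kron, rowsum_kron]
      have sD : ∑ j, Dmat x (n+1) (a, b) j
          = (∑ c, D1 x a c) * (∑ d, Dmat x n b d) + (∑ c, C1 x a c) * (∑ d, Bmat x n b d) := by
        rw [hD]
        erw [Finset.sum_add_distrib (f := fun j => _) (g := fun j => _)]
        rw [rowsum_kron, rowsum_kron]
      have h1 : (∑ c, A1 x a c) + (∑ c, B1 x a c) = 1 + x := by
        fin_cases a <;> simp [A1, B1, Fin.sum_univ_two] <;> ring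
      have h2 : (∑ c, C1 x a c) + (∑ c, D1 x a c) = 1 + x := by
        fin_cases a <;> simp [C1, D1, Fin.sum_univ_two] <;> ring
      refine ⟨?_, ?_, ?_⟩
      · rw [sA, sC, ← e1]
        linear_combination (∑ d : Idx n, Amat x n b d) * h1 - (∑ d : Idx n, Amat x n b d) * h2
      · rw [sB, sD, ← e2]
        linear_combination (∑ d : Idx n, Bmat x n b d) * h1 - (∑ d : Idx n, Bmat x n b d) * h2
      · rw [sA, sB, ← e1, ← e2]
        have : (1+x)^(n+1+1) = (1+x) * (1+x)^(n+1) := by ring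
        rw [this, ← e3, ← h1]; ring
    · rintro ⟨a, b⟩
      obtain ⟨f1, f2, f3⟩ := ihc b
      have sA : ∑ i, Amat x (n+1) i (a, b)
          = (∑ c, A1 x c a) * (∑ d, Amat x n d b) + (∑ c, B1 x c a) * (∑ d, Cmat x n d b) := by
        rw [hA]
        erw [Finset.sum_add_distrib (f := fun j => _) (g := fun j => _)]
        rw [colsum_kron, colsum_kron]
      have sB : ∑ i, Bmat x (n+1) i (a, b)
          = (∑ c, A1 x c a) * (∑ d, Bmat x n d b) + (∑ c, B1 x c a) * (∑ d, Dmat x n d b) := by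
        rw [hB]
        erw [Finset.sum_add_distrib (f := fun j => _) (g := fun j => _)]
        rw [colsum_kron, colsum_kron]
      have sC : ∑ i, Cmat x (n+1) i (a, b)
          = (∑ c, C1 x c a) * (∑ d, Amat x n d b) + (∑ c, D1 x c a) * (∑ d, Cmat x n d b) := by
        rw [hC]
        erw [Finset.sum_add_distrib (f := fun j => _) (g := fun j => _)]
        rw [colsum_kron, colsum_kron]
      have sD : ∑ i, Dmat x (n+1) i (a, b)
          = (∑ c, D1 x c a) * (∑ d, Dmat x n d b) + (∑ c, C1 x c a) * (∑ d, Bmat x n d b) := by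
        rw [hD]
        erw [Finset.sum_add_distrib (f := fun j => _) (g := fun j => _)]
        rw [colsum_kron, colsum_kron]
      have h1 : (∑ c, A1 x c a) = (∑ c, B1 x c a) := by
        fin_cases a <;> simp [A1, B1, Fin.sum_univ_two]
      have h2 : (∑ c, C1 x c a) = (∑ c, D1 x c a) := by
        fin_cases a <;> simp [C1, D1, Fin.sum_univ_two]
      have h3 : (∑ c, A1 x c a) + (∑ c, C1 x c a) = 1 + x := by
        fin_cases a <;> simp [A1, C1, Fin.sum_univ_two] <;> ring
      refine ⟨?_, ?_, ?_⟩
      · rw [sA, sB, ← h1, f1, f2]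
      · rw [sC, sD, ← h2, f1, f2]; ring
      · rw [sA, sC, ← h1, ← h2]
        have : (1+x)^(n+1+1) = (1+x) * (1+x)^(n+1) := by ring
        rw [this, ← f3, ← h3]; ring


theorem transfer_matrix_row_col_sums (x : ℝ) (n : ℕ) :
    (∀ i : Idx n, ∑ j : Idx n, (Amat x n + Dmat x n) i j = (1 + x) ^ (n + 1)) ∧
    (∀ j : Idx n, ∑ i : Idx n, (Amat x n + Dmat x n) i j = (1 + x) ^ (n + 1)) := by
  obtain ⟨hr, hc⟩ := key x n
  constructor
  · intro i
    obtain ⟨e1, e2, e3⟩ := hr i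
    simp only [Matrix.add_apply, Finset.sum_add_distrib]
    rw [← e2]; exact e3
  · intro j
    obtain ⟨f1, f2, f3⟩ := hc j
    simp only [Matrix.add_apply, Finset.sum_add_distrib]
    rw [← f2]; exact f3
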